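/- Under the setup of the regret bound for online stochastic gradient descent under the PL condition (Fₜ : ℝⁿ → ℝ differentiable, β-smooth, attaining infimum Fₜ*, satisfying the PL condition with constant μ > 0; |Fₜ₊₁ − Fₜ| ≤ Kηₜ pointwise; ‖∇Fₜ₊₁ − ∇Fₜ‖ ≤ Jₜ pointwise; unbiased stochastic gradient oracles Gₜ with variance bound σₜ² ≤ σ² for all t and a common σ > 0; iterates X₁ ≡ x₁, Xₜ₊₁ = Xₜ − γ Gₜ(Xₜ, ωₜ); suitable measurability and integrability), suppose T ≥ 2 and the step size is γ = Θ/√T with Θ = min(1/β, 1/(2μ)). Then Σₜ₌₁ᵀ E[Fₜ(Xₜ) − Fₜ*] ≤ M₁√T + M₂ √T Σₜ₌₁^{T−1} ηₜ + M₃ √T Σₜ₌₁^{T−1} Jₜ², where M₁ = (1/(μΘ))(F₁(x₁) − F₁*) + σ²/(2μ), M₂ = 2K/(μΘ), and M₃ = 1/(2μ²Θ). -/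

import Mathlib

open MeasureTheory
open scoped RealInnerProductSpace BigOperators

section descent
variable {E : Type*} [NormedAddCommGroup E] [InnerProductSpace ℝ E] [CompleteSpace E]

lemma grad_continuous {f : E → ℝ} {β : ℝ} (hβ : 0 ≤ β)
    (hL : ∀ u v, ‖gradient f u - gradient f v‖ ≤ β * ‖u - v‖) :
    Continuous (gradient f) := by
  have : LipschitzWith β.toNNReal (gradient f) := by
    apply LipschitzWith.of_dist_le_mul
    intro u v
    rw [dist_eq_norm, dist_eq_norm]
    simpa [Real.coe_toNNReal _ hβ] using hL u v
  exact this.continuous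

lemma lem_descent {f : E → ℝ} {β : ℝ} (hβ : 0 ≤ β) (hd : Differentiable ℝ f)
    (hL : ∀ u v, ‖gradient f u - gradient f v‖ ≤ β * ‖u - v‖) (x y : E) :
    f y ≤ f x + ⟪gradient f x, y - x⟫ + β / 2 * ‖y - x‖ ^ 2 := by
  set d := y - x with hdd
  have hderiv : ∀ s : ℝ, HasDerivAt (fun s : ℝ => f (x + s • d))
      ⟪gradient f (x + s • d), d⟫ s := by
    intro s
    have h1 : HasDerivAt (fun s : ℝ => x + s • d) d s := by
      simpa using ((hasDerivAt_id s).smul_const d).const_add x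
    have h2 : HasFDerivAt f ((InnerProductSpace.toDual ℝ E) (gradient f (x + s • d)))
        (x + s • d) := (hd _).hasGradientAt
    exact h2.comp_hasDerivAt s h1
  have hcont : Continuous fun s : ℝ => ⟪gradient f (x + s • d), d⟫ := by
    exact (Continuous.inner ((grad_continuous hβ hL).comp (by continuity)) continuous_const)
  have hint : ∀ a b : ℝ, IntervalIntegrable (fun s : ℝ => ⟪gradient f (x + s • d), d⟫)
      volume a b := fun a b => hcont.intervalIntegrable a b
  have hkey : f y - f x = ∫ s in (0:ℝ)..1, ⟪gradient f (x + s • d), d⟫ := by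
    have := intervalIntegral.integral_eq_sub_of_hasDerivAt
      (f := fun s : ℝ => f (x + s • d)) (f' := fun s : ℝ => ⟪gradient f (x + s • d), d⟫)
      (a := (0:ℝ)) (b := 1) (fun s _ => hderiv s) (hint 0 1)
    rw [this]
    congr 2 <;> simp [hdd]
  have hbound : ∫ s in (0:ℝ)..1, ⟪gradient f (x + s • d), d⟫
      ≤ ∫ s in (0:ℝ)..1, (⟪gradient f x, d⟫ + β * s * ‖d‖ ^ 2) := by
    apply intervalIntegral.integral_mono_on (by norm_num) (hint 0 1)
    · apply IntervalIntegrable.add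
      · exact intervalIntegrable_const
      · apply Continuous.intervalIntegrable; continuity
    · intro s hs
      have h1 : ⟪gradient f (x + s • d) - gradient f x, d⟫ ≤ β * s * ‖d‖ ^ 2 := by
        calc ⟪gradient f (x + s • d) - gradient f x, d⟫
            ≤ ‖gradient f (x + s • d) - gradient f x‖ * ‖d‖ := real_inner_le_norm _ _
          _ ≤ (β * ‖(x + s • d) - x‖) * ‖d‖ := by
              gcongr; exact hL _ _
          _ = β * (|s| * ‖d‖) * ‖d‖ := by rw [add_sub_cancel_left, norm_smul]; simp
          _ = β * |s| * ‖d‖ ^ 2 := by ring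
          _ = β * s * ‖d‖ ^ 2 := by rw [abs_of_nonneg hs.1]
      have h2 : ⟪gradient f (x + s • d), d⟫
          = ⟪gradient f x, d⟫ + ⟪gradient f (x + s • d) - gradient f x, d⟫ := by
        rw [inner_sub_left]; ring
      linarith
  have hval : ∫ s in (0:ℝ)..1, (⟪gradient f x, d⟫ + β * s * ‖d‖ ^ 2)
      = ⟪gradient f x, d⟫ + β / 2 * ‖d‖ ^ 2 := by
    rw [intervalIntegral.integral_add intervalIntegrable_const
      (by apply Continuous.intervalIntegrable; continuity)]
    have h3 : ∫ s in (0:ℝ)..1, β * s * ‖d‖ ^ 2 = β / 2 * ‖d‖ ^ 2 := by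
      simp_rw [show ∀ s : ℝ, β * s * ‖d‖ ^ 2 = (β * ‖d‖ ^ 2) * s from fun s => by ring]
      rw [intervalIntegral.integral_const_mul, integral_id]
      ring
    rw [h3]
    simp
  linarith [hkey, hbound, hval]

end descent

lemma measurable_finSnoc {k : ℕ} {A : Fin (k+1) → Type*} [∀ i, MeasurableSpace (A i)] :
    Measurable (fun p : ((i : Fin k) → A i.castSucc) × A (Fin.last k) => Fin.snoc p.1 p.2) := by
  rw [measurable_pi_iff]
  intro i
  induction i using Fin.lastCases with
  | last => simpa using measurable_snd
  | cast i => simpa [Function.comp_def] using (measurable_pi_apply i).comp measurable_fst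

lemma measurePreserving_finSnoc {k : ℕ} {A : Fin (k+1) → Type*} [∀ i, MeasurableSpace (A i)]
    (μ : ∀ i, Measure (A i)) [∀ i, IsProbabilityMeasure (μ i)] :
    MeasurePreserving (fun p : ((i : Fin k) → A i.castSucc) × A (Fin.last k) => Fin.snoc p.1 p.2)
      ((Measure.pi fun i : Fin k => μ i.castSucc).prod (μ (Fin.last k))) (Measure.pi μ) := by
  refine ⟨measurable_finSnoc, (Measure.pi_eq fun s hs => ?_).symm⟩
  rw [Measure.map_apply measurable_finSnoc (MeasurableSet.univ_pi hs)]
  have hpre : (fun p : ((i : Fin k) → A i.castSucc) × A (Fin.last k) => Fin.snoc p.1 p.2) ⁻¹'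
      (Set.univ.pi s) = (Set.univ.pi fun i : Fin k => s i.castSucc) ×ˢ (s (Fin.last k)) := by
    ext p
    simp only [Set.mem_preimage, Set.mem_pi, Set.mem_univ, forall_true_left, Set.mem_prod]
    constructor
    · intro h
      refine ⟨fun i => ?_, ?_⟩
      · have := h i.castSucc; rwa [Fin.snoc_castSucc] at this
      · have := h (Fin.last k); rwa [Fin.snoc_last] at this
    · rintro ⟨h1, h2⟩ i
      induction i using Fin.lastCases with
      | last => rwa [Fin.snoc_last]
      | cast i => rw [Fin.snoc_castSucc]; exact h1 i
  rw [hpre, Measure.prod_prod, Measure.pi_pi, Fin.prod_univ_castSucc]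

set_option maxHeartbeats 1000000 in
/-- **`O(√T)`-type regret bound for online SGD with the step size `γ = Θ/√T`.**
Same setup as the regret bound of online stochastic gradient descent under the PL
condition, with a common variance bound `σ²` for all gradient oracles, `T ≥ 2`,
`Θ = min(1/β, 1/(2 mu))` and `γ = Θ/√T`.  Then
`Σₜ₌₁ᵀ E[Fₜ(Xₜ) - Fₜ*] ≤ M₁√T + M₂√T Σηₜ + M₃√T ΣJₜ²` where
`M₁ = (1/(mu Θ))(F₁(x₁) - F₁*) + σ²/(2 mu)`, `M₂ = 2K/(mu Θ)`, `M₃ = 1/(2 mu² Θ)`. -/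
theorem stmt9 {n : ℕ} (hn : 1 ≤ n) (T : ℕ) (hT : 2 ≤ T)
    (β mu K σ : ℝ) (hβ : 0 < β) (hmu : 0 < mu) (hK : 0 < K) (hσ : 0 < σ)
    (F : ℕ → EuclideanSpace ℝ (Fin n) → ℝ) (Fs : ℕ → ℝ)
    (hFdiff : ∀ t, 1 ≤ t → t ≤ T → Differentiable ℝ (F t))
    (hFsmooth : ∀ t, 1 ≤ t → t ≤ T → ∀ u v : EuclideanSpace ℝ (Fin n),
      ‖gradient (F t) u - gradient (F t) v‖ ≤ β * ‖u - v‖)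
    (hFs_lb : ∀ t, 1 ≤ t → t ≤ T → ∀ x, Fs t ≤ F t x)
    (hFs_att : ∀ t, 1 ≤ t → t ≤ T → ∃ x, F t x = Fs t)
    (hPL : ∀ t, 1 ≤ t → t ≤ T → ∀ x,
      mu * (F t x - Fs t) ≤ (1 / 2) * ‖gradient (F t) x‖ ^ 2)
    (η J : ℕ → ℝ)
    (hη : ∀ t, 1 ≤ t → t ≤ T - 1 → 0 < η t)
    (hJ : ∀ t, 1 ≤ t → t ≤ T - 1 → 0 ≤ J t)
    (hdrift : ∀ t, 1 ≤ t → t ≤ T - 1 → ∀ x, |F (t + 1) x - F t x| ≤ K * η t)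
    (hgradshift : ∀ t, 1 ≤ t → t ≤ T - 1 → ∀ x,
      ‖gradient (F (t + 1)) x - gradient (F t) x‖ ≤ J t)
    (Ω : ℕ → Type*) [∀ t, MeasurableSpace (Ω t)]
    (P : (t : ℕ) → Measure (Ω t)) [∀ t, IsProbabilityMeasure (P t)]
    (G : (t : ℕ) → EuclideanSpace ℝ (Fin n) → Ω t → EuclideanSpace ℝ (Fin n))
    (hGmeas : ∀ t, 1 ≤ t → t ≤ T - 1 → Measurable (Function.uncurry (G t)))
    (hGint : ∀ t, 1 ≤ t → t ≤ T - 1 → ∀ x, Integrable (G t x) (P t))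
    (hGmean : ∀ t, 1 ≤ t → t ≤ T - 1 → ∀ x, ∫ ω, G t x ω ∂(P t) = gradient (F t) x)
    (hGvar : ∀ t, 1 ≤ t → t ≤ T - 1 → ∀ x,
      (∫ ω, ‖G t x ω - gradient (F t) x‖ ^ 2 ∂(P t)) ≤ σ ^ 2)
    (x1 : EuclideanSpace ℝ (Fin n)) (Θ γ : ℝ)
    (hΘ : Θ = min (1 / β) (1 / (2 * mu)))
    (hγ : γ = Θ / Real.sqrt T)
    (Y : (k : ℕ) → ((i : Fin k) → Ω (i + 1)) → EuclideanSpace ℝ (Fin n))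
    (hY0 : ∀ ω, Y 0 ω = x1)
    (hYrec : ∀ k : ℕ, k + 1 < T → ∀ ω : (i : Fin (k + 1)) → Ω (i + 1),
      Y (k + 1) ω = Y k (fun i => ω i.castSucc)
        - γ • G (k + 1) (Y k (fun i => ω i.castSucc)) (ω (Fin.last k)))
    (hYmeas : ∀ k, k < T → Measurable (Y k))
    (hFXint : ∀ k, k < T → Integrable (fun ω => F (k + 1) (Y k ω))
      (Measure.pi (fun i : Fin k => P (i + 1))))
    (hgradXint : ∀ k, k < T → Integrable (fun ω => ‖gradient (F (k + 1)) (Y k ω)‖ ^ 2)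
      (Measure.pi (fun i : Fin k => P (i + 1))))
    (hGXint : ∀ k : ℕ, k + 1 < T →
      Integrable (fun ω : (i : Fin (k + 1)) → Ω (i + 1) =>
          ‖G (k + 1) (Y k (fun i => ω i.castSucc)) (ω (Fin.last k))‖ ^ 2)
        (Measure.pi (fun i : Fin (k + 1) => P (i + 1)))) :
    ∑ k ∈ Finset.range T,
        (∫ ω, (F (k + 1) (Y k ω) - Fs (k + 1)) ∂(Measure.pi (fun i : Fin k => P (i + 1))))
      ≤ ((1 / (mu * Θ)) * (F 1 x1 - Fs 1) + σ ^ 2 / (2 * mu)) * Real.sqrt T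
        + (2 * K / (mu * Θ)) * Real.sqrt T * ∑ t ∈ Finset.Icc 1 (T - 1), η t
        + (1 / (2 * mu ^ 2 * Θ)) * Real.sqrt T * ∑ t ∈ Finset.Icc 1 (T - 1), (J t) ^ 2 := by
  classical
  -- basic constants
  set s := Real.sqrt T with hs
  have hs1 : (1:ℝ) ≤ s := by
    rw [hs, show (1:ℝ) = Real.sqrt 1 by simp]
    exact Real.sqrt_le_sqrt (by exact_mod_cast Nat.one_le_of_lt hT)
  have hs0 : 0 < s := lt_of_lt_of_le one_pos hs1
  have hss : s * s = (T : ℝ) := Real.mul_self_sqrt (by positivity)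
  have hΘpos : 0 < Θ := by
    rw [hΘ]; exact lt_min (by positivity) (by positivity)
  have hγpos : 0 < γ := by rw [hγ]; positivity
  have hβΘ : β * Θ ≤ 1 := by
    rw [hΘ]
    have : min (1/β) (1/(2*mu)) ≤ 1/β := min_le_left _ _
    calc β * min (1/β) (1/(2*mu)) ≤ β * (1/β) := by gcongr
      _ = 1 := by field_simp
  have hμΘ : 2 * mu * Θ ≤ 1 := by
    rw [hΘ]
    have : min (1/β) (1/(2*mu)) ≤ 1/(2*mu) := min_le_right _ _
    calc 2 * mu * min (1/β) (1/(2*mu)) ≤ 2 * mu * (1/(2*mu)) := by gcongr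
      _ = 1 := by field_simp
  have hγs : γ * s = Θ := by rw [hγ]; field_simp
  have hβγ : β * γ ≤ 1 := by
    have : β * γ * s ≤ 1 := by rw [mul_assoc, hγs]; exact hβΘ
    nlinarith [hγpos, hβ]
  have hγμ : γ * mu ≤ 1 / 2 := by
    have h1 : γ ≤ Θ := by
      rw [hγ]
      calc Θ / s ≤ Θ / 1 := by gcongr
        _ = Θ := by ring
    nlinarith
  set d : ℕ → ℝ := fun k =>
    ∫ ω, (F (k + 1) (Y k ω) - Fs (k + 1)) ∂(Measure.pi (fun i : Fin k => P (i + 1))) with hdDef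
  have hd0 : d 0 = F 1 x1 - Fs 1 := by
    rw [hdDef]
    simp only
    have : ∀ ω : (i : Fin 0) → Ω (i+1), F 1 (Y 0 ω) - Fs 1 = F 1 x1 - Fs 1 := by
      intro ω; rw [hY0]
    rw [integral_congr_ae (ae_of_all _ this), integral_const]
    simp
  have hdnn : ∀ k, k < T → 0 ≤ d k := by
    intro k hk
    apply integral_nonneg
    intro ω
    have := hFs_lb (k+1) (by omega) (by omega) (Y k ω)
    simp only [Pi.zero_apply]
    linarith
  have hrec : ∀ k, k + 1 < T →
      d (k+1) ≤ (1 - γ * mu) * d k + β * γ^2 * σ^2 / 2 + 2 * K * η (k+1) := by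
    intro k hk
    have h1k : 1 ≤ k + 1 := by omega
    have hkT1 : k + 1 ≤ T - 1 := by omega
    have hkTT : k + 1 ≤ T := by omega
    have hkltT : k < T := by omega
    have hk2T : k + 2 ≤ T := by omega
    set μk : Measure ((i : Fin k) → Ω (i+1)) := Measure.pi (fun i : Fin k => P (i + 1)) with hμk
    set ν : Measure (Ω (k+1)) := P (k+1) with hν
    set ρ : Measure (((i : Fin k) → Ω (i+1)) × Ω (k+1)) := μk.prod ν with hρ
    set m : ((i : Fin k) → Ω (i+1)) × Ω (k+1) → ((i : Fin (k+1)) → Ω (i+1)) :=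
      fun p => Fin.snoc p.1 p.2 with hmDef
    have hm : MeasurePreserving m ρ (Measure.pi (fun i : Fin (k+1) => P (i + 1))) :=
      measurePreserving_finSnoc (A := fun i : Fin (k+1) => Ω (i+1)) (fun i => P (i + 1))
    have hYm : ∀ z, Y (k+1) (m z) = Y k z.1 - γ • G (k+1) (Y k z.1) z.2 := by
      intro z
      rw [hYrec k hk]
      have h1 : (fun i : Fin k => (m z) i.castSucc) = z.1 :=
        funext fun i => Fin.snoc_castSucc _ _ _
      have h2 : (m z) (Fin.last k) = z.2 := Fin.snoc_last _ _
      rw [h1, h2]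
    have hFcont : ∀ t, 1 ≤ t → t ≤ T → Continuous (F t) := fun t ha hb => (hFdiff t ha hb).continuous
    have hXm : Measurable (Y k) := hYmeas k hkltT
    have hgmeas : Measurable (fun x => gradient (F (k+1)) (Y k x)) :=
      ((grad_continuous hβ.le (hFsmooth (k+1) h1k hkTT)).measurable).comp hXm
    have hGum : Measurable (Function.uncurry (G (k+1))) := hGmeas (k+1) h1k hkT1
    have hGzm : Measurable (fun z : ((i : Fin k) → Ω (i+1)) × Ω (k+1) => G (k+1) (Y k z.1) z.2) :=
      hGum.comp ((hXm.comp measurable_fst).prodMk measurable_snd)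
    have hfst : MeasurePreserving Prod.fst ρ μk :=
      ⟨measurable_fst, by rw [hρ, Measure.map_fst_prod]; simp⟩
    have hIF : Integrable (fun z : ((i : Fin k) → Ω (i+1)) × Ω (k+1) => F (k+1) (Y k z.1)) ρ := by
      have h0 := hFXint k hkltT
      exact (hfst.integrable_comp h0.aestronglyMeasurable).mpr h0
    have hIg2 : Integrable
        (fun z : ((i : Fin k) → Ω (i+1)) × Ω (k+1) => ‖gradient (F (k+1)) (Y k z.1)‖^2) ρ := by
      have h0 := hgradXint k hkltT
      exact (hfst.integrable_comp h0.aestronglyMeasurable).mpr h0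
    have hIG2 : Integrable
        (fun z : ((i : Fin k) → Ω (i+1)) × Ω (k+1) => ‖G (k+1) (Y k z.1) z.2‖^2) ρ := by
      have h0 := hGXint k hk
      have h1 := (hm.integrable_comp h0.aestronglyMeasurable).mpr h0
      refine h1.congr (ae_of_all _ fun z => ?_)
      simp only [Function.comp]
      rw [show (fun i : Fin k => (m z) i.castSucc) = z.1 from
        funext fun i => Fin.snoc_castSucc _ _ _, show (m z) (Fin.last k) = z.2 from
        Fin.snoc_last _ _]
    have hIinner : Integrable (fun z : ((i : Fin k) → Ω (i+1)) × Ω (k+1) =>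
        ⟪gradient (F (k+1)) (Y k z.1), G (k+1) (Y k z.1) z.2⟫) ρ := by
      refine Integrable.mono' (hIg2.add hIG2) ?_ (ae_of_all _ fun z => ?_)
      · exact ((hgmeas.comp measurable_fst).inner hGzm).aestronglyMeasurable
      · have h1 := abs_real_inner_le_norm (gradient (F (k+1)) (Y k z.1)) (G (k+1) (Y k z.1) z.2)
        show ‖(⟪gradient (F (k+1)) (Y k z.1), G (k+1) (Y k z.1) z.2⟫ : ℝ)‖
          ≤ ‖gradient (F (k+1)) (Y k z.1)‖^2 + ‖G (k+1) (Y k z.1) z.2‖^2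
        rw [Real.norm_eq_abs]
        nlinarith [norm_nonneg (gradient (F (k+1)) (Y k z.1)),
          norm_nonneg (G (k+1) (Y k z.1) z.2),
          sq_nonneg (‖gradient (F (k+1)) (Y k z.1)‖ - ‖G (k+1) (Y k z.1) z.2‖)]
    have hident : ∀ z : ((i : Fin k) → Ω (i+1)) × Ω (k+1),
        ‖G (k+1) (Y k z.1) z.2 - gradient (F (k+1)) (Y k z.1)‖^2
          = ‖G (k+1) (Y k z.1) z.2‖^2
            - 2 * ⟪gradient (F (k+1)) (Y k z.1), G (k+1) (Y k z.1) z.2⟫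
            + ‖gradient (F (k+1)) (Y k z.1)‖^2 := by
      intro z
      rw [@norm_sub_sq_real, real_inner_comm]
    have hIGd2 : Integrable (fun z : ((i : Fin k) → Ω (i+1)) × Ω (k+1) =>
        ‖G (k+1) (Y k z.1) z.2 - gradient (F (k+1)) (Y k z.1)‖^2) ρ :=
      ((hIG2.sub (hIinner.const_mul 2)).add hIg2).congr (ae_of_all _ fun z => (hident z).symm)
    have hI2 : ∫ z, ⟪gradient (F (k+1)) (Y k z.1), G (k+1) (Y k z.1) z.2⟫ ∂ρ
        = ∫ x, ‖gradient (F (k+1)) (Y k x)‖^2 ∂μk := by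
      rw [hρ, integral_prod _ hIinner]
      refine integral_congr_ae (ae_of_all _ fun x => ?_)
      show (∫ y, ⟪gradient (F (k+1)) (Y k x), G (k+1) (Y k x) y⟫ ∂ν)
        = ‖gradient (F (k+1)) (Y k x)‖^2
      rw [integral_inner (hGint (k+1) h1k hkT1 (Y k x)), hGmean (k+1) h1k hkT1 (Y k x),
        real_inner_self_eq_norm_sq]
    have hIfst : ∫ z, F (k+1) (Y k z.1) ∂ρ = ∫ x, F (k+1) (Y k x) ∂μk := by
      have h0 := integral_fun_fst (μ := μk) (ν := ν) (f := fun x => F (k+1) (Y k x))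
      simpa using h0
    have hg2fst : ∫ z, ‖gradient (F (k+1)) (Y k z.1)‖^2 ∂ρ
        = ∫ x, ‖gradient (F (k+1)) (Y k x)‖^2 ∂μk := by
      have h0 := integral_fun_fst (μ := μk) (ν := ν)
        (f := fun x => ‖gradient (F (k+1)) (Y k x)‖^2)
      simpa using h0
    have hvar : ∫ z, ‖G (k+1) (Y k z.1) z.2 - gradient (F (k+1)) (Y k z.1)‖^2 ∂ρ ≤ σ^2 := by
      rw [hρ, integral_prod _ hIGd2]
      calc ∫ x, (∫ y, ‖G (k+1) (Y k x) y - gradient (F (k+1)) (Y k x)‖^2 ∂ν) ∂μk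
          ≤ ∫ (_ : (i : Fin k) → Ω (i+1)), σ^2 ∂μk := by
            apply integral_mono hIGd2.integral_prod_left (integrable_const _)
            intro x
            exact hGvar (k+1) h1k hkT1 (Y k x)
        _ = σ^2 := by simp
    have hG2bound : ∫ z, ‖G (k+1) (Y k z.1) z.2‖^2 ∂ρ
        ≤ σ^2 + ∫ x, ‖gradient (F (k+1)) (Y k x)‖^2 ∂μk := by
      have hI2sub : Integrable (fun z : ((i : Fin k) → Ω (i+1)) × Ω (k+1) =>
          2 * ⟪gradient (F (k+1)) (Y k z.1), G (k+1) (Y k z.1) z.2⟫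
            - ‖gradient (F (k+1)) (Y k z.1)‖^2) ρ := (hIinner.const_mul 2).sub hIg2
      have e0 : ∫ z, ‖G (k+1) (Y k z.1) z.2‖^2 ∂ρ
          = ∫ z, (‖G (k+1) (Y k z.1) z.2 - gradient (F (k+1)) (Y k z.1)‖^2
            + (2 * ⟪gradient (F (k+1)) (Y k z.1), G (k+1) (Y k z.1) z.2⟫
              - ‖gradient (F (k+1)) (Y k z.1)‖^2)) ∂ρ :=
        integral_congr_ae (ae_of_all _ fun z => by have := hident z; simp only; linarith)
      have e1 : ∫ z, (‖G (k+1) (Y k z.1) z.2 - gradient (F (k+1)) (Y k z.1)‖^2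
            + (2 * ⟪gradient (F (k+1)) (Y k z.1), G (k+1) (Y k z.1) z.2⟫
              - ‖gradient (F (k+1)) (Y k z.1)‖^2)) ∂ρ
          = (∫ z, ‖G (k+1) (Y k z.1) z.2 - gradient (F (k+1)) (Y k z.1)‖^2 ∂ρ)
            + ∫ z, (2 * ⟪gradient (F (k+1)) (Y k z.1), G (k+1) (Y k z.1) z.2⟫
              - ‖gradient (F (k+1)) (Y k z.1)‖^2) ∂ρ := integral_add hIGd2 hI2sub
      have e2 : ∫ z, (2 * ⟪gradient (F (k+1)) (Y k z.1), G (k+1) (Y k z.1) z.2⟫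
              - ‖gradient (F (k+1)) (Y k z.1)‖^2) ∂ρ
          = (∫ z, 2 * ⟪gradient (F (k+1)) (Y k z.1), G (k+1) (Y k z.1) z.2⟫ ∂ρ)
            - ∫ z, ‖gradient (F (k+1)) (Y k z.1)‖^2 ∂ρ :=
        integral_sub (hIinner.const_mul 2) hIg2
      have e3 : ∫ z, 2 * ⟪gradient (F (k+1)) (Y k z.1), G (k+1) (Y k z.1) z.2⟫ ∂ρ
          = 2 * ∫ z, ⟪gradient (F (k+1)) (Y k z.1), G (k+1) (Y k z.1) z.2⟫ ∂ρ :=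
        integral_const_mul 2 _
      rw [e0, e1, e2, e3, hg2fst, hI2]
      linarith [hvar]
    have hIYnext : Integrable (fun z => F (k+2) (Y (k+1) (m z))) ρ := by
      have h0 := hFXint (k+1) hk
      exact (hm.integrable_comp h0.aestronglyMeasurable).mpr h0
    have hYnm : Measurable (fun z => Y (k+1) (m z)) := (hYmeas (k+1) hk).comp hm.measurable
    have hIYcur : Integrable (fun z => F (k+1) (Y (k+1) (m z))) ρ := by
      have hdiffI : Integrable (fun z => F (k+2) (Y (k+1) (m z)) - F (k+1) (Y (k+1) (m z))) ρ := by
        refine Integrable.mono' (integrable_const (K * η (k+1))) ?_ (ae_of_all _ fun z => ?_)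
        · exact (((hFcont (k+2) (by omega) hk2T).measurable.comp hYnm).sub
            ((hFcont (k+1) h1k hkTT).measurable.comp hYnm)).aestronglyMeasurable
        · rw [Real.norm_eq_abs]; exact hdrift (k+1) h1k hkT1 _
      have h2 : Integrable (fun z => F (k + 2) (Y (k + 1) (m z))
          - (F (k + 2) (Y (k + 1) (m z)) - F (k + 1) (Y (k + 1) (m z)))) ρ :=
        hIYnext.sub hdiffI
      refine h2.congr (ae_of_all _ fun z => by ring)
    have hdesc : ∀ z, F (k+1) (Y (k+1) (m z)) ≤ F (k+1) (Y k z.1)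
        - γ * ⟪gradient (F (k+1)) (Y k z.1), G (k+1) (Y k z.1) z.2⟫
        + β * γ^2 / 2 * ‖G (k+1) (Y k z.1) z.2‖^2 := by
      intro z
      have h0 := lem_descent hβ.le (hFdiff (k+1) h1k hkTT) (hFsmooth (k+1) h1k hkTT)
        (Y k z.1) (Y k z.1 - γ • G (k+1) (Y k z.1) z.2)
      have h1 : (Y k z.1 - γ • G (k+1) (Y k z.1) z.2) - Y k z.1
          = -(γ • G (k+1) (Y k z.1) z.2) := by abel
      rw [h1, inner_neg_right, real_inner_smul_right, norm_neg, norm_smul,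
        Real.norm_eq_abs, abs_of_pos hγpos, mul_pow] at h0
      rw [hYm z]
      linarith
    have hRHSint1 : Integrable (fun z : ((i : Fin k) → Ω (i+1)) × Ω (k+1) =>
        F (k+1) (Y k z.1)
          - γ * ⟪gradient (F (k+1)) (Y k z.1), G (k+1) (Y k z.1) z.2⟫) ρ :=
      hIF.sub (hIinner.const_mul γ)
    have hRHSint : Integrable (fun z : ((i : Fin k) → Ω (i+1)) × Ω (k+1) =>
        F (k+1) (Y k z.1)
          - γ * ⟪gradient (F (k+1)) (Y k z.1), G (k+1) (Y k z.1) z.2⟫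
          + β * γ^2 / 2 * ‖G (k+1) (Y k z.1) z.2‖^2) ρ :=
      hRHSint1.add (hIG2.const_mul _)
    have hstep : ∫ z, F (k+1) (Y (k+1) (m z)) ∂ρ
        ≤ ∫ x, F (k+1) (Y k x) ∂μk
          - γ * ∫ x, ‖gradient (F (k+1)) (Y k x)‖^2 ∂μk
          + β * γ^2 / 2 * (σ^2 + ∫ x, ‖gradient (F (k+1)) (Y k x)‖^2 ∂μk) := by
      have h1 := integral_mono hIYcur hRHSint hdesc
      have e1 : ∫ z, (F (k+1) (Y k z.1)
            - γ * ⟪gradient (F (k+1)) (Y k z.1), G (k+1) (Y k z.1) z.2⟫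
            + β * γ^2 / 2 * ‖G (k+1) (Y k z.1) z.2‖^2) ∂ρ
          = (∫ z, (F (k+1) (Y k z.1)
            - γ * ⟪gradient (F (k+1)) (Y k z.1), G (k+1) (Y k z.1) z.2⟫) ∂ρ)
            + ∫ z, β * γ^2 / 2 * ‖G (k+1) (Y k z.1) z.2‖^2 ∂ρ :=
        integral_add hRHSint1 (hIG2.const_mul _)
      have e2 : ∫ z, (F (k+1) (Y k z.1)
            - γ * ⟪gradient (F (k+1)) (Y k z.1), G (k+1) (Y k z.1) z.2⟫) ∂ρ
          = (∫ z, F (k+1) (Y k z.1) ∂ρ)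
            - ∫ z, γ * ⟪gradient (F (k+1)) (Y k z.1), G (k+1) (Y k z.1) z.2⟫ ∂ρ :=
        integral_sub hIF (hIinner.const_mul γ)
      have e3 : ∫ z, γ * ⟪gradient (F (k+1)) (Y k z.1), G (k+1) (Y k z.1) z.2⟫ ∂ρ
          = γ * ∫ z, ⟪gradient (F (k+1)) (Y k z.1), G (k+1) (Y k z.1) z.2⟫ ∂ρ :=
        integral_const_mul γ _
      have e4 : ∫ z, β * γ^2 / 2 * ‖G (k+1) (Y k z.1) z.2‖^2 ∂ρ
          = β * γ^2 / 2 * ∫ z, ‖G (k+1) (Y k z.1) z.2‖^2 ∂ρ :=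
        integral_const_mul _ _
      have h2 : β * γ^2 / 2 * (∫ z, ‖G (k+1) (Y k z.1) z.2‖^2 ∂ρ)
          ≤ β * γ^2 / 2 * (σ^2 + ∫ x, ‖gradient (F (k+1)) (Y k x)‖^2 ∂μk) :=
        mul_le_mul_of_nonneg_left hG2bound (by positivity)
      rw [e1, e2, e3, e4, hIfst, hI2] at h1
      linarith
    have hIFk := hFXint k hkltT
    have hIg2k := hgradXint k hkltT
    have hdkval : d k = ∫ x, (F (k+1) (Y k x) - Fs (k+1)) ∂μk := rfl
    have hconstk : ∫ (_ : (i : Fin k) → Ω (i+1)), Fs (k+1) ∂μk = Fs (k+1) := by simp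
    have hPLint : 2 * mu * d k ≤ ∫ x, ‖gradient (F (k+1)) (Y k x)‖^2 ∂μk := by
      have hIconst : Integrable (fun x : (i : Fin k) → Ω (i+1) =>
          2 * mu * (F (k+1) (Y k x) - Fs (k+1))) μk :=
        (hIFk.sub (integrable_const _)).const_mul _
      have h1 : ∫ x, 2 * mu * (F (k+1) (Y k x) - Fs (k+1)) ∂μk
          ≤ ∫ x, ‖gradient (F (k+1)) (Y k x)‖^2 ∂μk :=
        integral_mono hIconst hIg2k
          (fun x => by have := hPL (k+1) h1k hkTT (Y k x); simp only; linarith)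
      have e1 : ∫ x, 2 * mu * (F (k+1) (Y k x) - Fs (k+1)) ∂μk
          = 2 * mu * ∫ x, (F (k+1) (Y k x) - Fs (k+1)) ∂μk := integral_const_mul _ _
      rw [hdkval]
      linarith
    have hAval : ∫ x, F (k+1) (Y k x) ∂μk = d k + Fs (k+1) := by
      have e1 : ∫ x, (F (k+1) (Y k x) - Fs (k+1)) ∂μk
          = (∫ x, F (k+1) (Y k x) ∂μk) - ∫ (_ : (i : Fin k) → Ω (i+1)), Fs (k+1) ∂μk :=
        integral_sub hIFk (integrable_const _)
      rw [hdkval, e1, hconstk]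
      ring
    have hFs_shift : Fs (k+1) ≤ Fs (k+2) + K * η (k+1) := by
      obtain ⟨xs, hxs⟩ := hFs_att (k+2) (by omega) hk2T
      have h1 := hFs_lb (k+1) h1k hkTT xs
      have h3 := (abs_le.mp (hdrift (k+1) h1k hkT1 xs)).1
      linarith
    have hd1transfer : d (k+1) = ∫ z, (F (k+2) (Y (k+1) (m z)) - Fs (k+2)) ∂ρ := by
      show (∫ ω, (F (k+1+1) (Y (k+1) ω) - Fs (k+1+1))
        ∂(Measure.pi fun i : Fin (k+1) => P (i + 1))) = _
      rw [← hm.map_eq, integral_map hm.measurable.aemeasurable]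
      exact (((hFcont (k+2) (by omega) hk2T).measurable.comp (hYmeas (k+1) hk)).sub
        measurable_const).aestronglyMeasurable
    have hIcurFs : Integrable (fun z => F (k+1) (Y (k+1) (m z)) - Fs (k+1)) ρ :=
      hIYcur.sub (integrable_const _)
    have hconstρ : ∀ c : ℝ, ∫ (_ : ((i : Fin k) → Ω (i+1)) × Ω (k+1)), c ∂ρ = c := by
      intro c; simp
    have hfin1 : d (k+1) ≤ (∫ z, F (k+1) (Y (k+1) (m z)) ∂ρ) - Fs (k+1) + 2 * K * η (k+1) := by
      rw [hd1transfer]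
      have h1 : ∫ z, (F (k+2) (Y (k+1) (m z)) - Fs (k+2)) ∂ρ
          ≤ ∫ z, ((F (k+1) (Y (k+1) (m z)) - Fs (k+1)) + 2 * K * η (k+1)) ∂ρ := by
        apply integral_mono (hIYnext.sub (integrable_const _)) (hIcurFs.add (integrable_const _))
        intro z
        have h2 := (abs_le.mp (hdrift (k+1) h1k hkT1 (Y (k+1) (m z)))).2
        simp only [Pi.sub_apply, Pi.add_apply]
        linarith [hFs_shift]
      have e1 : ∫ z, ((F (k+1) (Y (k+1) (m z)) - Fs (k+1)) + 2 * K * η (k+1)) ∂ρ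
          = (∫ z, (F (k+1) (Y (k+1) (m z)) - Fs (k+1)) ∂ρ)
            + ∫ (_ : ((i : Fin k) → Ω (i+1)) × Ω (k+1)), 2 * K * η (k+1) ∂ρ :=
        integral_add hIcurFs (integrable_const _)
      have e2 : ∫ z, (F (k+1) (Y (k+1) (m z)) - Fs (k+1)) ∂ρ
          = (∫ z, F (k+1) (Y (k+1) (m z)) ∂ρ)
            - ∫ (_ : ((i : Fin k) → Ω (i+1)) × Ω (k+1)), Fs (k+1) ∂ρ :=
        integral_sub hIYcur (integrable_const _)
      rw [e1, e2, hconstρ, hconstρ] at h1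
      linarith
    have hBnn : 0 ≤ ∫ x, ‖gradient (F (k+1)) (Y k x)‖^2 ∂μk :=
      integral_nonneg fun x => by positivity
    have hx2 : β * γ^2 / 2 * (∫ x, ‖gradient (F (k+1)) (Y k x)‖^2 ∂μk)
        ≤ γ / 2 * (∫ x, ‖gradient (F (k+1)) (Y k x)‖^2 ∂μk) := by
      apply mul_le_mul_of_nonneg_right _ hBnn
      nlinarith [hβγ, hγpos]
    have hx1 : γ / 2 * (2 * mu * d k) ≤ γ / 2 * (∫ x, ‖gradient (F (k+1)) (Y k x)‖^2 ∂μk) :=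
      mul_le_mul_of_nonneg_left hPLint (by positivity)
    nlinarith [hfin1, hstep, hAval, hx1, hx2]
  -- summation
  have hTsplit : ∑ k ∈ Finset.range T, d k = (∑ k ∈ Finset.range (T-1), d (k+1)) + d 0 := by
    conv_lhs => rw [show T = (T-1)+1 from by omega]
    exact Finset.sum_range_succ' d (T-1)
  have hsum2 : ∑ k ∈ Finset.range (T-1), d (k+1)
      ≤ (1 - γ*mu) * (∑ k ∈ Finset.range (T-1), d k)
        + ((T-1 : ℕ) : ℝ) * (β*γ^2*σ^2/2) + 2*K*(∑ k ∈ Finset.range (T-1), η (k+1)) := by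
    have h1 : ∑ k ∈ Finset.range (T-1), d (k+1)
        ≤ ∑ k ∈ Finset.range (T-1), ((1 - γ*mu) * d k + β*γ^2*σ^2/2 + 2*K*η (k+1)) :=
      Finset.sum_le_sum fun k hk => hrec k (by have := Finset.mem_range.mp hk; omega)
    calc ∑ k ∈ Finset.range (T-1), d (k+1)
        ≤ ∑ k ∈ Finset.range (T-1), ((1 - γ*mu) * d k + β*γ^2*σ^2/2 + 2*K*η (k+1)) := h1
      _ = (1 - γ*mu) * (∑ k ∈ Finset.range (T-1), d k)
          + ((T-1 : ℕ) : ℝ) * (β*γ^2*σ^2/2) + 2*K*(∑ k ∈ Finset.range (T-1), η (k+1)) := by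
        rw [Finset.sum_add_distrib, Finset.sum_add_distrib, ← Finset.mul_sum, ← Finset.mul_sum,
          Finset.sum_const, Finset.card_range, nsmul_eq_mul]
  have h1γμ : 0 ≤ 1 - γ * mu := by linarith
  have hmono : ∑ k ∈ Finset.range (T-1), d k ≤ ∑ k ∈ Finset.range T, d k :=
    Finset.sum_le_sum_of_subset_of_nonneg (Finset.range_subset_range.mpr (by omega))
      (fun k hk _ => hdnn k (Finset.mem_range.mp hk))
  have hkey : γ * mu * (∑ k ∈ Finset.range T, d k)
      ≤ d 0 + ((T-1:ℕ):ℝ) * (β*γ^2*σ^2/2) + 2*K*(∑ k ∈ Finset.range (T-1), η (k+1)) := by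
    nlinarith [mul_le_mul_of_nonneg_left hmono h1γμ, hTsplit, hsum2]
  have hη_reindex : ∑ k ∈ Finset.range (T-1), η (k+1) = ∑ t ∈ Finset.Icc 1 (T-1), η t := by
    rw [← Finset.Ico_add_one_right_eq_Icc, Finset.sum_Ico_eq_sum_range]
    exact Finset.sum_congr rfl fun i _ => by rw [add_comm]
  have hSη : (0:ℝ) ≤ ∑ t ∈ Finset.Icc 1 (T-1), η t :=
    Finset.sum_nonneg fun t ht =>
      (hη t (Finset.mem_Icc.mp ht).1 (Finset.mem_Icc.mp ht).2).le
  have hSJ : (0:ℝ) ≤ ∑ t ∈ Finset.Icc 1 (T-1), (J t)^2 :=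
    Finset.sum_nonneg fun t _ => sq_nonneg _
  have hcast : ((T-1:ℕ):ℝ) ≤ (T:ℝ) := by
    have h : (T-1:ℕ) ≤ T := by omega
    exact_mod_cast h
  have e1 : (T:ℝ) * γ^2 = Θ^2 := by rw [← hss, ← hγs]; ring
  have hσbound : ((T-1:ℕ):ℝ) * (β*γ^2*σ^2/2) ≤ Θ*σ^2/2 := by
    have h2 : ((T-1:ℕ):ℝ) * (β*γ^2*σ^2/2) ≤ (T:ℝ) * (β*γ^2*σ^2/2) := by
      apply mul_le_mul_of_nonneg_right hcast (by positivity)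
    have h3 : (T:ℝ) * (β*γ^2*σ^2/2) = β * Θ^2 * σ^2/2 := by rw [← e1]; ring
    have h4 : 0 ≤ (1 - β*Θ) * (Θ * σ^2) := mul_nonneg (by linarith) (by positivity)
    nlinarith [h2, h3, h4]
  rw [hd0, hη_reindex] at hkey
  have hpos : (0:ℝ) < γ * mu := by positivity
  rw [← mul_le_mul_iff_of_pos_left hpos]
  have hRHS : γ * mu * (((1 / (mu * Θ)) * (F 1 x1 - Fs 1) + σ ^ 2 / (2 * mu)) * s
        + (2 * K / (mu * Θ)) * s * (∑ t ∈ Finset.Icc 1 (T - 1), η t)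
        + (1 / (2 * mu ^ 2 * Θ)) * s * (∑ t ∈ Finset.Icc 1 (T - 1), (J t) ^ 2))
      = (F 1 x1 - Fs 1) + Θ * σ^2/2 + 2*K*(∑ t ∈ Finset.Icc 1 (T - 1), η t)
        + (1/(2*mu)) * (∑ t ∈ Finset.Icc 1 (T - 1), (J t) ^ 2) := by
    rw [← hγs]
    field_simp
  rw [hRHS]
  have hJnn : 0 ≤ (1/(2*mu)) * (∑ t ∈ Finset.Icc 1 (T - 1), (J t) ^ 2) := by positivity
  linarith [hkey, hσbound]
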